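/- (Asymptotics of the L^{n/2}-norm of the Moser-type test functions) Let n ≥ 3, let F° be a Finsler norm on ℝⁿ with unit-ball volume κ_n = |{F° ≤ 1}|, and let λ_n = n^{n/(n−2)}(n−2)^{n/(n−2)} κ_n^{2/(n−2)}. For small ε > 0 define u_ε(x) = (ln(1/ε)/λ_n)^{(n−2)/n} − F°(x)²/(ε ln(1/ε))^{2/n} + (ln(1/ε))^{−2/n} for F°(x) ≤ ε^{1/n}; u_ε(x) = n λ_n^{2/n−1} (ln(1/ε))^{−2/n} ln(1/F°(x)) for ε^{1/n} ≤ F°(x) ≤ 1; and u_ε = 0 for F°(x) > 1. Then ∫_{ℝⁿ} |u_ε|^{n/2} dx = O(1/ln(1/ε)) as ε → 0. -/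

import Mathlib

open MeasureTheory Real Set Pointwise

lemma dyadic_aux (n : ℕ) (hn : 3 ≤ n) {E : Type*} [MeasurableSpace E]
    (μ : Measure E) (Fo : E → ℝ) (Fmeas : Measurable Fo) (κ : ℝ) (hκ : 0 ≤ κ)
    (hvol : ∀ r : ℝ, 0 < r → r ≤ 1 → μ {x | Fo x ≤ r} ≤ ENNReal.ofReal (κ * r ^ n)) :
    ∫⁻ x in {x | 0 < Fo x ∧ Fo x ≤ 1}, ENNReal.ofReal ((Real.log (1 / Fo x)) ^ ((n:ℝ)/2)) ∂μ
      ≤ ENNReal.ofReal (κ * ∑' k : ℕ, ((k:ℝ)+1) ^ n * (((1:ℝ)/2) ^ n) ^ k) := by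
  set r : ℝ := ((1:ℝ)/2) ^ n with hr
  have hr0 : 0 < r := by positivity
  have hr1 : r < 1 := by
    apply pow_lt_one₀ (by norm_num) (by norm_num); omega
  have hsum : Summable (fun k : ℕ => ((k:ℝ)+1) ^ n * r ^ k) := by
    have h1 : Summable (fun j : ℕ => (j:ℝ) ^ n * r ^ j) :=
      summable_pow_mul_geometric_of_norm_lt_one n (by rw [Real.norm_eq_abs, abs_of_pos hr0]; exact hr1)
    have h2 := (summable_nat_add_iff 1).mpr h1
    have h3 := h2.mul_left r⁻¹
    apply h3.congr
    intro k
    push_cast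
    field_simp
    ring
  -- the dyadic pieces
  set S : ℕ → Set E := fun k => {x | ((1:ℝ)/2) ^ (k+1) < Fo x ∧ Fo x ≤ ((1:ℝ)/2) ^ k} with hS
  have hcover : {x | 0 < Fo x ∧ Fo x ≤ 1} ⊆ ⋃ k, S k := by
    intro x ⟨hx0, hx1⟩
    have hex : ∃ m : ℕ, ((1:ℝ)/2) ^ (m+1) < Fo x := by
      obtain ⟨m, hm⟩ := exists_pow_lt_of_lt_one hx0 (show (1:ℝ)/2 < 1 by norm_num)
      exact ⟨m, lt_of_le_of_lt (by apply pow_le_pow_of_le_one <;> norm_num) hm⟩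
    classical
    set k := Nat.find hex with hk
    have hk1 : ((1:ℝ)/2) ^ (k+1) < Fo x := Nat.find_spec hex
    have hk2 : Fo x ≤ ((1:ℝ)/2) ^ k := by
      rcases Nat.eq_zero_or_pos k with h0 | hpos'
      · rw [h0]; simpa using hx1
      · have := Nat.find_min hex (show k - 1 < k by omega)
        have hk' : k - 1 + 1 = k := by omega
        rw [hk'] at this
        exact not_lt.mp this
    exact Set.mem_iUnion.mpr ⟨k, hk1, hk2⟩
  have hSm : ∀ k, MeasurableSet (S k) := by
    intro k
    exact (measurableSet_lt measurable_const Fmeas).inter (measurableSet_le Fmeas measurable_const)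
  calc ∫⁻ x in {x | 0 < Fo x ∧ Fo x ≤ 1}, ENNReal.ofReal ((Real.log (1 / Fo x)) ^ ((n:ℝ)/2)) ∂μ
      ≤ ∫⁻ x in ⋃ k, S k, ENNReal.ofReal ((Real.log (1 / Fo x)) ^ ((n:ℝ)/2)) ∂μ :=
        lintegral_mono_set hcover
    _ ≤ ∑' k, ∫⁻ x in S k, ENNReal.ofReal ((Real.log (1 / Fo x)) ^ ((n:ℝ)/2)) ∂μ :=
        lintegral_iUnion_le _ _
    _ ≤ ∑' k : ℕ, ENNReal.ofReal (κ * (((k:ℝ)+1) ^ n * r ^ k)) := by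
        apply ENNReal.tsum_le_tsum
        intro k
        have hbound : ∀ x ∈ S k,
            ENNReal.ofReal ((Real.log (1 / Fo x)) ^ ((n:ℝ)/2))
              ≤ ENNReal.ofReal ((((k:ℝ)+1)) ^ n) := by
          intro x ⟨hx1, hx2⟩
          have hx0 : 0 < Fo x := lt_trans (by positivity) hx1
          apply ENNReal.ofReal_le_ofReal
          have hlogpos : 0 ≤ Real.log (1 / Fo x) := by
            apply Real.log_nonneg
            rw [le_div_iff₀ hx0, one_mul]
            exact hx2.trans (pow_le_one₀ (by norm_num) (by norm_num))
          have hlogle : Real.log (1 / Fo x) ≤ (k:ℝ) + 1 := by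
            rw [one_div, Real.log_inv]
            have : Real.log (((1:ℝ)/2) ^ (k+1)) < Real.log (Fo x) :=
              Real.log_lt_log (by positivity) hx1
            rw [Real.log_pow] at this
            have hlog2 : Real.log ((1:ℝ)/2) = - Real.log 2 := by
              rw [one_div, Real.log_inv]
            rw [hlog2] at this
            push_cast at this
            have h2 : Real.log 2 ≤ 1 := (Real.log_le_sub_one_of_pos (by norm_num)).trans (by norm_num)
            nlinarith [Real.log_nonneg (show (1:ℝ) ≤ 2 by norm_num), Nat.cast_nonneg (α := ℝ) k]
          calc (Real.log (1 / Fo x)) ^ ((n:ℝ)/2) ≤ ((k:ℝ)+1) ^ ((n:ℝ)/2) :=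
                Real.rpow_le_rpow hlogpos hlogle (by positivity)
            _ ≤ ((k:ℝ)+1) ^ ((n:ℝ)) := by
                apply Real.rpow_le_rpow_of_exponent_le (by linarith [Nat.cast_nonneg (α := ℝ) k])
                have : (0:ℝ) ≤ n := Nat.cast_nonneg n
                linarith
            _ = ((k:ℝ)+1) ^ n := Real.rpow_natCast _ n
        calc ∫⁻ x in S k, ENNReal.ofReal ((Real.log (1 / Fo x)) ^ ((n:ℝ)/2)) ∂μ
            ≤ ∫⁻ _ in S k, ENNReal.ofReal ((((k:ℝ)+1)) ^ n) ∂μ :=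
              setLIntegral_mono measurable_const hbound
          _ = ENNReal.ofReal ((((k:ℝ)+1)) ^ n) * μ (S k) := setLIntegral_const _ _
          _ ≤ ENNReal.ofReal ((((k:ℝ)+1)) ^ n) * ENNReal.ofReal (κ * (((1:ℝ)/2) ^ k) ^ n) := by
              gcongr
              refine le_trans (measure_mono ?_) (hvol (((1:ℝ)/2) ^ k) (by positivity)
                (pow_le_one₀ (by norm_num) (by norm_num)))
              intro x hx; exact hx.2
          _ = ENNReal.ofReal (κ * (((k:ℝ)+1) ^ n * r ^ k)) := by
              rw [← ENNReal.ofReal_mul (by positivity)]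
              congr 1
              rw [hr, ← pow_right_comm]
              ring
    _ = ENNReal.ofReal (κ * ∑' k : ℕ, ((k:ℝ)+1) ^ n * r ^ k) := by
        rw [← ENNReal.ofReal_tsum_of_nonneg (fun k => mul_nonneg hκ (by positivity))
          (by exact hsum.mul_left κ)]
        congr 1
        exact hsum.tsum_mul_left κ

theorem stmt_15 (n : ℕ) (hn : 3 ≤ n) (Fo : EuclideanSpace ℝ (Fin n) → ℝ)
    (hconv : ConvexOn ℝ Set.univ Fo)
    (hhom : ∀ (t : ℝ) ξ, Fo (t • ξ) = |t| * Fo ξ)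
    (hpos : ∀ ξ, ξ ≠ 0 → 0 < Fo ξ)
    (κ lamn : ℝ)
    (hκ : κ = (MeasureTheory.volume {x : EuclideanSpace ℝ (Fin n) | Fo x ≤ 1}).toReal)
    (hlam : lamn = (n : ℝ) ^ ((n : ℝ) / ((n : ℝ) - 2)) *
      ((n : ℝ) - 2) ^ ((n : ℝ) / ((n : ℝ) - 2)) * κ ^ (2 / ((n : ℝ) - 2))) :
    ∃ C > 0, ∃ ε₀ ∈ Set.Ioo (0 : ℝ) 1, ∀ ε : ℝ, 0 < ε → ε < ε₀ →
      (∫ x : EuclideanSpace ℝ (Fin n),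
        |if Fo x ≤ ε ^ (1 / (n : ℝ)) then
            (Real.log (1 / ε) / lamn) ^ (((n : ℝ) - 2) / n) -
              Fo x ^ 2 / (ε * Real.log (1 / ε)) ^ (2 / (n : ℝ)) +
              (Real.log (1 / ε)) ^ (-(2 / (n : ℝ)))
          else if Fo x ≤ 1 then
            (n : ℝ) * lamn ^ (2 / (n : ℝ) - 1) * (Real.log (1 / ε)) ^ (-(2 / (n : ℝ))) *
              Real.log (1 / Fo x)
          else 0| ^ ((n : ℝ) / 2)) ≤ C / Real.log (1 / ε) := by
  have hn0 : (0:ℝ) < n := Nat.cast_pos.mpr (by omega)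
  have hnne : (n:ℝ) ≠ 0 := ne_of_gt hn0
  -- basic facts about Fo
  have Fcont : Continuous Fo := by
    rw [← continuousOn_univ]; exact hconv.continuousOn isOpen_univ
  have F0 : Fo 0 = 0 := by simpa using hhom 0 0
  have Fmeas : Measurable Fo := Fcont.measurable
  have Fnonneg : ∀ x, 0 ≤ Fo x := by
    intro x
    rcases eq_or_ne x 0 with rfl | hx
    · rw [F0]
    · exact (hpos x hx).le
  -- scaling of sublevel sets
  have hscale : ∀ r : ℝ, 0 < r →
      volume {x : EuclideanSpace ℝ (Fin n) | Fo x ≤ r}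
        = ENNReal.ofReal (r ^ n) * volume {x : EuclideanSpace ℝ (Fin n) | Fo x ≤ 1} := by
    intro r hr
    have : {x : EuclideanSpace ℝ (Fin n) | Fo x ≤ r}
        = r • {x : EuclideanSpace ℝ (Fin n) | Fo x ≤ 1} := by
      ext x
      rw [Set.mem_smul_set_iff_inv_smul_mem₀ hr.ne']
      simp only [Set.mem_setOf_eq, hhom, abs_inv, abs_of_pos hr]
      rw [inv_mul_le_one₀ hr]
    rw [this, MeasureTheory.Measure.addHaar_smul_of_nonneg volume hr.le,
      finrank_euclideanSpace_fin]
  -- finiteness of the unit ball volume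
  have hfin : volume {x : EuclideanSpace ℝ (Fin n) | Fo x ≤ 1} < ⊤ := by
    haveI : Nontrivial (EuclideanSpace ℝ (Fin n)) := by
      apply Module.nontrivial_of_finrank_pos (R := ℝ) (M := EuclideanSpace ℝ (Fin n))
      rw [finrank_euclideanSpace_fin]; omega
    obtain ⟨x₀, hx₀s, hx₀min⟩ := (isCompact_sphere (0 : EuclideanSpace ℝ (Fin n)) 1).exists_isMinOn
      (NormedSpace.sphere_nonempty.mpr zero_le_one) Fcont.continuousOn
    have hx₀n : ‖x₀‖ = 1 := mem_sphere_zero_iff_norm.mp hx₀s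
    have hm : 0 < Fo x₀ := hpos _ (by intro h; rw [h] at hx₀n; simp at hx₀n)
    have hlow : ∀ x : EuclideanSpace ℝ (Fin n), Fo x₀ * ‖x‖ ≤ Fo x := by
      intro x
      rcases eq_or_ne x 0 with rfl | hx
      · simp [F0]
      · have hnx : (0:ℝ) < ‖x‖ := norm_pos_iff.mpr hx
        have hmem : ‖x‖⁻¹ • x ∈ Metric.sphere (0 : EuclideanSpace ℝ (Fin n)) 1 := by
          simp [norm_smul, abs_of_pos (inv_pos.mpr hnx), inv_mul_cancel₀ hnx.ne']
        have hmin := hx₀min hmem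
        have heq : Fo x = ‖x‖ * Fo (‖x‖⁻¹ • x) := by
          have heq0 := hhom ‖x‖ (‖x‖⁻¹ • x)
          rwa [smul_inv_smul₀ hnx.ne', abs_of_pos hnx] at heq0
        rw [heq]
        calc Fo x₀ * ‖x‖ ≤ Fo (‖x‖⁻¹ • x) * ‖x‖ := mul_le_mul_of_nonneg_right hmin hnx.le
          _ = ‖x‖ * Fo (‖x‖⁻¹ • x) := mul_comm _ _
    calc volume {x : EuclideanSpace ℝ (Fin n) | Fo x ≤ 1}
        ≤ volume (Metric.closedBall (0 : EuclideanSpace ℝ (Fin n)) (Fo x₀)⁻¹) := by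
          apply measure_mono
          intro x hx
          simp only [Set.mem_setOf_eq] at hx
          have hl := hlow x
          rw [Metric.mem_closedBall, dist_zero_right]
          rw [← le_div_iff₀' hm] at hl
          refine hl.trans ?_
          calc Fo x / Fo x₀ ≤ 1 / Fo x₀ := by gcongr
            _ = (Fo x₀)⁻¹ := one_div _
      _ < ⊤ := measure_closedBall_lt_top
  have hμ1 : volume {x : EuclideanSpace ℝ (Fin n) | Fo x ≤ 1} = ENNReal.ofReal κ := by
    rw [hκ, ENNReal.ofReal_toReal hfin.ne]
  have hκ0 : 0 ≤ κ := hκ ▸ ENNReal.toReal_nonneg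
  have hlam0 : 0 ≤ lamn := by
    rw [hlam]
    have h1 : (0:ℝ) < (n:ℝ) ^ ((n : ℝ) / ((n : ℝ) - 2)) := Real.rpow_pos_of_pos hn0 _
    have h2 : (0:ℝ) < ((n:ℝ) - 2) ^ ((n : ℝ) / ((n : ℝ) - 2)) := by
      apply Real.rpow_pos_of_pos
      have : (3:ℝ) ≤ n := by exact_mod_cast hn
      linarith
    have h3 : (0:ℝ) ≤ κ ^ (2 / ((n : ℝ) - 2)) := Real.rpow_nonneg hκ0 _
    positivity
  -- the series constant
  set T : ℝ := ∑' k : ℕ, ((k:ℝ)+1) ^ n * (((1:ℝ)/2) ^ n) ^ k with hT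
  have hT0 : 0 ≤ T := tsum_nonneg (fun k => by positivity)
  -- constants
  set c₁ : ℝ := (lamn ^ (((n:ℝ) - 2) / n))⁻¹ + 1 with hc₁
  have hc₁0 : 0 < c₁ := by
    rw [hc₁]
    have : 0 ≤ (lamn ^ (((n:ℝ) - 2) / n))⁻¹ := inv_nonneg.mpr (Real.rpow_nonneg hlam0 _)
    linarith
  set c₂ : ℝ := ((n:ℝ) * lamn ^ (2/(n:ℝ) - 1)) ^ ((n:ℝ)/2) with hc₂
  have hc₂0 : 0 ≤ c₂ :=
    Real.rpow_nonneg (mul_nonneg hn0.le (Real.rpow_nonneg hlam0 _)) _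
  set cin : ℝ := c₁ ^ ((n:ℝ)/2) * ((n+1).factorial : ℝ) * κ with hcin
  have hcin0 : 0 ≤ cin := by
    have := Real.rpow_nonneg hc₁0.le ((n:ℝ)/2)
    positivity
  refine ⟨cin + c₂ * (κ * T) + 1, by positivity, Real.exp (-1), ⟨Real.exp_pos _, by
    rw [Real.exp_lt_one_iff]; norm_num⟩, ?_⟩
  intro ε hε hεe
  set L : ℝ := Real.log (1 / ε) with hL
  have hL1 : 1 < L := by
    rw [hL, one_div, Real.log_inv]
    have := Real.log_lt_log hε hεe
    rw [Real.log_exp] at this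
    linarith
  have hL0 : 0 < L := by linarith
  have hεexp : Real.exp (-L) = ε := by
    rw [hL, one_div, Real.log_inv, neg_neg, Real.exp_log hε]
  have hε1 : ε < 1 := by
    rw [← hεexp]
    calc Real.exp (-L) < Real.exp 0 := by apply Real.exp_lt_exp.mpr; linarith
      _ = 1 := Real.exp_zero

  -- setup for fixed ε
  set a : ℝ := ε ^ (1 / (n:ℝ)) with ha
  have ha0 : 0 < a := Real.rpow_pos_of_pos hε _
  have han : a ^ n = ε := by
    rw [ha, ← Real.rpow_natCast (ε ^ (1/(n:ℝ))) n, ← Real.rpow_mul hε.le,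
      one_div, inv_mul_cancel₀ hnne, Real.rpow_one]
  set A := {x : EuclideanSpace ℝ (Fin n) | Fo x ≤ a} with hA
  set B := {x : EuclideanSpace ℝ (Fin n) | Fo x ≤ 1} with hB
  have hAm : MeasurableSet A := measurableSet_le Fmeas measurable_const
  have hBm : MeasurableSet B := measurableSet_le Fmeas measurable_const
  set f : EuclideanSpace ℝ (Fin n) → ℝ := fun x =>
    |if Fo x ≤ a then
        (L / lamn) ^ (((n:ℝ) - 2) / n) - Fo x ^ 2 / (ε * L) ^ (2 / (n:ℝ)) + L ^ (-(2 / (n:ℝ)))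
      else if Fo x ≤ 1 then
        (n:ℝ) * lamn ^ (2 / (n:ℝ) - 1) * L ^ (-(2 / (n:ℝ))) * Real.log (1 / Fo x)
      else 0| ^ ((n:ℝ) / 2) with hf
  have hfnn : ∀ x, 0 ≤ f x := fun x => Real.rpow_nonneg (abs_nonneg _) _
  have hfmeas : Measurable f := by
    apply Measurable.pow (g := fun _ => (n:ℝ)/2) ?_ measurable_const
    apply Measurable.abs
    apply Measurable.ite (measurableSet_le Fmeas measurable_const)
    · exact (measurable_const.sub ((Fmeas.pow_const 2).div_const _)).add measurable_const
    · apply Measurable.ite (measurableSet_le Fmeas measurable_const)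
      · exact (Real.measurable_log.comp (measurable_const.div Fmeas)).const_mul _
      · exact measurable_const
  have key : ∫ x, f x = (∫⁻ x, ENNReal.ofReal (f x)).toReal :=
    integral_eq_lintegral_of_nonneg_ae (Filter.Eventually.of_forall hfnn)
      hfmeas.aestronglyMeasurable
  -- the key exponential inequality
  have hεLn : ε * L ^ ((n:ℝ)/2) ≤ ((n+1).factorial : ℝ) / L := by
    have hfac : (0:ℝ) < ((n+1).factorial : ℝ) := by exact_mod_cast (n+1).factorial_pos
    have h1 : L ^ ((n:ℝ)/2) ≤ L ^ (n:ℝ) := by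
      apply Real.rpow_le_rpow_of_exponent_le hL1.le
      linarith
    have h2 : L ^ (n:ℝ) = L ^ n := Real.rpow_natCast L n
    have h3 : L ^ (n+1) / ((n+1).factorial : ℝ) ≤ Real.exp L :=
      Real.pow_div_factorial_le_exp (x := L) hL0.le (n+1)
    rw [div_le_iff₀ hfac] at h3
    have h4 : Real.exp (-L) * Real.exp L = 1 := by rw [← Real.exp_add]; simp
    calc ε * L ^ ((n:ℝ)/2) ≤ ε * L ^ (n:ℝ) := by
          exact mul_le_mul_of_nonneg_left h1 hε.le
      _ = Real.exp (-L) * L ^ n := by rw [h2, hεexp]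
      _ ≤ ((n+1).factorial : ℝ) / L := by
          rw [le_div_iff₀ hL0]
          calc Real.exp (-L) * L ^ n * L = Real.exp (-L) * L ^ (n+1) := by
                rw [pow_succ]; ring
            _ ≤ Real.exp (-L) * (Real.exp L * ((n+1).factorial : ℝ)) :=
                mul_le_mul_of_nonneg_left h3 (Real.exp_nonneg _)
            _ = ((n+1).factorial : ℝ) := by rw [← mul_assoc, h4, one_mul]
  -- inner pointwise bound
  have hinner : ∀ x ∈ A, f x ≤ c₁ ^ ((n:ℝ)/2) * L ^ ((n:ℝ)/2) := by
    intro x hx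
    have hFa : Fo x ≤ a := hx
    have hden : (0:ℝ) < (ε * L) ^ (2/(n:ℝ)) := Real.rpow_pos_of_pos (by positivity) _
    have hquot : Fo x ^ 2 / (ε * L) ^ (2/(n:ℝ)) ≤ L ^ (-(2/(n:ℝ))) := by
      have hnum : Fo x ^ 2 ≤ ε ^ (2/(n:ℝ)) := by
        have h0 : Fo x ^ 2 ≤ a ^ 2 := pow_le_pow_left₀ (Fnonneg x) hFa 2
        have he : a ^ 2 = ε ^ (2/(n:ℝ)) := by
          rw [ha, ← Real.rpow_natCast (ε ^ (1/(n:ℝ))) 2, ← Real.rpow_mul hε.le]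
          congr 1
          push_cast
          ring
        rw [← he]; exact h0
      have hden' : (ε * L) ^ (2/(n:ℝ)) = ε ^ (2/(n:ℝ)) * L ^ (2/(n:ℝ)) :=
        Real.mul_rpow hε.le hL0.le
      have hε2 : (0:ℝ) < ε ^ (2/(n:ℝ)) := Real.rpow_pos_of_pos hε _
      have hL2 : (0:ℝ) < L ^ (2/(n:ℝ)) := Real.rpow_pos_of_pos hL0 _
      calc Fo x ^ 2 / (ε * L) ^ (2/(n:ℝ)) = Fo x ^ 2 / (ε ^ (2/(n:ℝ)) * L ^ (2/(n:ℝ))) := by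
            rw [hden']
        _ ≤ ε ^ (2/(n:ℝ)) / (ε ^ (2/(n:ℝ)) * L ^ (2/(n:ℝ))) := by gcongr
        _ = (L ^ (2/(n:ℝ)))⁻¹ := by field_simp
        _ = L ^ (-(2/(n:ℝ))) := (Real.rpow_neg hL0.le _).symm
    have hq0 : 0 ≤ Fo x ^ 2 / (ε * L) ^ (2/(n:ℝ)) := div_nonneg (sq_nonneg _) hden.le
    have h1 : 0 ≤ (L/lamn) ^ (((n:ℝ)-2)/n) := Real.rpow_nonneg (div_nonneg hL0.le hlam0) _
    have humin : 0 ≤ (L/lamn) ^ (((n:ℝ)-2)/n) - Fo x ^ 2 / (ε*L) ^ (2/(n:ℝ)) + L ^ (-(2/(n:ℝ))) := by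
      have hLneg : 0 ≤ L ^ (-(2/(n:ℝ))) := Real.rpow_nonneg hL0.le _
      linarith
    have humax : (L/lamn) ^ (((n:ℝ)-2)/n) - Fo x ^ 2 / (ε*L) ^ (2/(n:ℝ)) + L ^ (-(2/(n:ℝ)))
        ≤ c₁ * L := by
      have hd : (L/lamn) ^ (((n:ℝ)-2)/n) = L ^ (((n:ℝ)-2)/n) / lamn ^ (((n:ℝ)-2)/n) :=
        Real.div_rpow hL0.le hlam0 _
      have h2 : L ^ (((n:ℝ)-2)/n) ≤ L := by
        calc L ^ (((n:ℝ)-2)/n) ≤ L ^ (1:ℝ) := by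
              apply Real.rpow_le_rpow_of_exponent_le hL1.le
              rw [div_le_one hn0]; linarith
          _ = L := Real.rpow_one L
      have h3 : L ^ (-(2/(n:ℝ))) ≤ 1 := by
        apply Real.rpow_le_one_of_one_le_of_nonpos hL1.le
        have : 0 < 2/(n:ℝ) := by positivity
        linarith
      have h5 : 0 ≤ (lamn ^ (((n:ℝ)-2)/n))⁻¹ := inv_nonneg.mpr (Real.rpow_nonneg hlam0 _)
      have h6 : L ^ (((n:ℝ)-2)/n) / lamn ^ (((n:ℝ)-2)/n) ≤ L * (lamn ^ (((n:ℝ)-2)/n))⁻¹ := by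
        rw [div_eq_mul_inv]
        exact mul_le_mul_of_nonneg_right h2 h5
      rw [hc₁, hd]
      have hexp : ((lamn ^ (((n:ℝ)-2)/n))⁻¹ + 1) * L = L * (lamn ^ (((n:ℝ)-2)/n))⁻¹ + L := by
        ring
      rw [hexp]
      linarith
    have hfx : f x = ((L/lamn) ^ (((n:ℝ)-2)/n) - Fo x ^ 2 / (ε*L) ^ (2/(n:ℝ))
        + L ^ (-(2/(n:ℝ)))) ^ ((n:ℝ)/2) := by
      simp only [hf]
      rw [if_pos hFa, abs_of_nonneg humin]
    rw [hfx, ← Real.mul_rpow hc₁0.le hL0.le]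
    exact Real.rpow_le_rpow humin humax (by positivity)
  -- inner integral bound
  have hIA : ∫⁻ x in A, ENNReal.ofReal (f x) ≤ ENNReal.ofReal (cin / L) := by
    have hc₁n : 0 ≤ c₁ ^ ((n:ℝ)/2) := Real.rpow_nonneg hc₁0.le _
    have hLn2 : 0 ≤ L ^ ((n:ℝ)/2) := Real.rpow_nonneg hL0.le _
    calc ∫⁻ x in A, ENNReal.ofReal (f x)
        ≤ ∫⁻ _ in A, ENNReal.ofReal (c₁ ^ ((n:ℝ)/2) * L ^ ((n:ℝ)/2)) ∂volume :=
          setLIntegral_mono measurable_const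
            (fun x hx => ENNReal.ofReal_le_ofReal (hinner x hx))
      _ = ENNReal.ofReal (c₁ ^ ((n:ℝ)/2) * L ^ ((n:ℝ)/2)) * volume A := setLIntegral_const _ _
      _ = ENNReal.ofReal (c₁ ^ ((n:ℝ)/2) * L ^ ((n:ℝ)/2)) * (ENNReal.ofReal ε * ENNReal.ofReal κ) := by
          rw [hA, hscale a ha0, han, hμ1]
      _ = ENNReal.ofReal (c₁ ^ ((n:ℝ)/2) * L ^ ((n:ℝ)/2) * (ε * κ)) := by
          rw [← ENNReal.ofReal_mul hε.le, ENNReal.ofReal_mul (mul_nonneg hc₁n hLn2)]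
      _ ≤ ENNReal.ofReal (cin / L) := by
          apply ENNReal.ofReal_le_ofReal
          rw [hcin]
          calc c₁ ^ ((n:ℝ)/2) * L ^ ((n:ℝ)/2) * (ε * κ)
              = (c₁ ^ ((n:ℝ)/2) * κ) * (ε * L ^ ((n:ℝ)/2)) := by ring
            _ ≤ (c₁ ^ ((n:ℝ)/2) * κ) * (((n+1).factorial : ℝ) / L) :=
                mul_le_mul_of_nonneg_left hεLn (mul_nonneg hc₁n hκ0)
            _ = c₁ ^ ((n:ℝ)/2) * ((n+1).factorial : ℝ) * κ / L := by ring
  -- middle pointwise bound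
  have hnl0 : 0 ≤ (n:ℝ) * lamn ^ (2/(n:ℝ) - 1) := mul_nonneg hn0.le (Real.rpow_nonneg hlam0 _)
  have hmidpt : ∀ x ∈ Aᶜ ∩ B, ENNReal.ofReal (f x) ≤
      ENNReal.ofReal (c₂ / L) * ENNReal.ofReal ((Real.log (1 / Fo x)) ^ ((n:ℝ)/2)) := by
    rintro x ⟨hxA, hxB⟩
    have hxa : ¬ (Fo x ≤ a) := hxA
    have hxB' : Fo x ≤ 1 := hxB
    have hx0 : 0 < Fo x := lt_trans ha0 (not_le.mp hxa)
    have hlog0 : 0 ≤ Real.log (1 / Fo x) := by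
      apply Real.log_nonneg
      rw [le_div_iff₀ hx0, one_mul]; exact hxB'
    have hLr : 0 ≤ L ^ (-(2/(n:ℝ))) := Real.rpow_nonneg hL0.le _
    have hu0 : 0 ≤ (n:ℝ) * lamn ^ (2/(n:ℝ)-1) * L ^ (-(2/(n:ℝ))) * Real.log (1/Fo x) :=
      mul_nonneg (mul_nonneg hnl0 hLr) hlog0
    have hfx : f x = ((n:ℝ) * lamn ^ (2/(n:ℝ)-1) * L ^ (-(2/(n:ℝ))) * Real.log (1/Fo x))
        ^ ((n:ℝ)/2) := by
      simp only [hf]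
      rw [if_neg hxa, if_pos hxB', abs_of_nonneg hu0]
    rw [hfx, ← ENNReal.ofReal_mul (div_nonneg hc₂0 hL0.le)]
    apply ENNReal.ofReal_le_ofReal
    have e1 : ((n:ℝ) * lamn ^ (2/(n:ℝ)-1) * L ^ (-(2/(n:ℝ))) * Real.log (1/Fo x)) ^ ((n:ℝ)/2)
        = c₂ * (L ^ (-(2/(n:ℝ)))) ^ ((n:ℝ)/2) * (Real.log (1/Fo x)) ^ ((n:ℝ)/2) := by
      rw [Real.mul_rpow (mul_nonneg hnl0 hLr) hlog0, Real.mul_rpow hnl0 hLr, hc₂]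
    have e2 : (L ^ (-(2/(n:ℝ)))) ^ ((n:ℝ)/2) = L⁻¹ := by
      rw [← Real.rpow_mul hL0.le]
      have : -(2/(n:ℝ)) * ((n:ℝ)/2) = -1 := by field_simp
      rw [this, Real.rpow_neg_one]
    rw [e1, e2, div_eq_mul_inv]
    apply le_of_eq
    ring
  -- volume hypothesis for the dyadic lemma
  have hvol' : ∀ r : ℝ, 0 < r → r ≤ 1 →
      volume {x : EuclideanSpace ℝ (Fin n) | Fo x ≤ r} ≤ ENNReal.ofReal (κ * r ^ n) := by
    intro r h1 h2
    rw [hscale r h1, hμ1, ← ENNReal.ofReal_mul (pow_nonneg h1.le n), mul_comm]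
  -- middle integral bound
  have hgm : Measurable fun x : EuclideanSpace ℝ (Fin n) =>
      ENNReal.ofReal ((Real.log (1 / Fo x)) ^ ((n:ℝ)/2)) :=
    (((Real.measurable_log.comp (measurable_const.div Fmeas)).pow measurable_const).ennreal_ofReal)
  have hIB : ∫⁻ x in Aᶜ ∩ B, ENNReal.ofReal (f x) ≤ ENNReal.ofReal (c₂ * (κ * T) / L) := by
    calc ∫⁻ x in Aᶜ ∩ B, ENNReal.ofReal (f x)
        ≤ ∫⁻ x in Aᶜ ∩ B, ENNReal.ofReal (c₂ / L)
            * ENNReal.ofReal ((Real.log (1 / Fo x)) ^ ((n:ℝ)/2)) ∂volume :=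
          setLIntegral_mono (measurable_const.mul hgm) hmidpt
      _ = ENNReal.ofReal (c₂ / L)
            * ∫⁻ x in Aᶜ ∩ B, ENNReal.ofReal ((Real.log (1 / Fo x)) ^ ((n:ℝ)/2)) ∂volume :=
          lintegral_const_mul _ hgm
      _ ≤ ENNReal.ofReal (c₂ / L) * ENNReal.ofReal (κ * T) := by
          gcongr
          refine le_trans (lintegral_mono_set ?_) (dyadic_aux n hn volume Fo Fmeas κ hκ0 hvol')
          rintro x ⟨hxA, hxB⟩
          exact ⟨lt_trans ha0 (not_le.mp hxA), hxB⟩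
      _ = ENNReal.ofReal (c₂ * (κ * T) / L) := by
          rw [← ENNReal.ofReal_mul (div_nonneg hc₂0 hL0.le)]
          congr 1
          ring
  -- outer piece vanishes
  have hIC : ∫⁻ x in Aᶜ ∩ Bᶜ, ENNReal.ofReal (f x) = 0 := by
    have : ∀ x ∈ Aᶜ ∩ Bᶜ, ENNReal.ofReal (f x) = 0 := by
      rintro x ⟨hxA, hxB⟩
      have h1 : ¬ (Fo x ≤ a) := hxA
      have h2 : ¬ (Fo x ≤ 1) := hxB
      simp only [hf]
      rw [if_neg h1, if_neg h2, abs_zero, Real.zero_rpow (by positivity), ENNReal.ofReal_zero]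
    rw [setLIntegral_congr_fun (hAm.compl.inter hBm.compl)
      (g := fun _ => 0) this, lintegral_zero]
  -- put everything together
  rw [key]
  have hC0 : 0 ≤ (cin + c₂ * (κ * T) + 1) / L :=
    div_nonneg (by positivity) hL0.le
  apply ENNReal.toReal_le_of_le_ofReal hC0
  calc ∫⁻ x, ENNReal.ofReal (f x)
      = (∫⁻ x in A, ENNReal.ofReal (f x)) + ∫⁻ x in Aᶜ, ENNReal.ofReal (f x) :=
        (lintegral_add_compl _ hAm).symm
    _ ≤ ENNReal.ofReal (cin / L)
        + (ENNReal.ofReal (c₂ * (κ * T) / L) + 0) := by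
        apply add_le_add hIA
        have hsplit : ∫⁻ x in Aᶜ, ENNReal.ofReal (f x)
            = ∫⁻ x in (Aᶜ ∩ B) ∪ (Aᶜ ∩ Bᶜ), ENNReal.ofReal (f x) := by
          rw [Set.inter_union_compl]
        rw [hsplit]
        refine le_trans (lintegral_union_le _ _ _) ?_
        exact add_le_add hIB (le_of_eq hIC)
    _ ≤ ENNReal.ofReal ((cin + c₂ * (κ * T) + 1) / L) := by
        rw [add_zero, ← ENNReal.ofReal_add (div_nonneg hcin0 hL0.le)
          (div_nonneg (mul_nonneg hc₂0 (mul_nonneg hκ0 hT0)) hL0.le), ← add_div]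
        apply ENNReal.ofReal_le_ofReal
        exact (div_le_div_iff_of_pos_right hL0).mpr (by linarith)
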